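/- Let x₀,…,x_N and y₀,…,y_N be positive reals. Define R_{N+1} = [∏_{j=0}^{N-1}(x_j + y_{j+1})·(x_N + y₀)] / [∏_{j=1}^{N}(x_j + y_j)·(x₀ + y₀)]. Suppose R_N := [∏_{j=0}^{N-2}(x_j + y_{j+1})·(x_{N-1} + y₀)] / [∏_{j=1}^{N-1}(x_j + y_j)·(x₀ + y₀)] ≥ 1, and suppose (y_N − y₀)·(x_N − x_{N-1}) ≥ 0. Then R_{N+1} = R_N · [(x_{N-1}+y_N)(x_N+y₀)] / [(x_N+y_N)(x_{N-1}+y₀)] ≥ 1. -/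

import Mathlib

open Finset

theorem inductive_step_cycle_ratio
    (N : ℕ) (hN : 1 ≤ N) (x y : ℕ → ℝ)
    (hx : ∀ j, 0 < x j) (hy : ∀ j, 0 < y j)
    (RN RN1 : ℝ)
    (hRN : RN = ((∏ j ∈ Finset.range (N - 1), (x j + y (j + 1))) * (x (N - 1) + y 0)) /
      ((∏ j ∈ Finset.Icc 1 (N - 1), (x j + y j)) * (x 0 + y 0)))
    (hRN1 : RN1 = ((∏ j ∈ Finset.range N, (x j + y (j + 1))) * (x N + y 0)) /
      ((∏ j ∈ Finset.Icc 1 N, (x j + y j)) * (x 0 + y 0)))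
    (hRN_ge : 1 ≤ RN)
    (hcompat₁ : y 0 ≤ y N → x (N - 1) ≤ x N)
    (hcompat₂ : y N < y 0 → x N < x (N - 1)) :
    RN1 = RN * ((x (N - 1) + y N) * (x N + y 0)) / ((x N + y N) * (x (N - 1) + y 0)) ∧
      1 ≤ RN1 := by
  obtain ⟨M, rfl⟩ : ∃ M, N = M + 1 := ⟨N - 1, by omega⟩
  simp only [Nat.add_sub_cancel] at *
  have hP : (0:ℝ) < ∏ j ∈ Finset.range M, (x j + y (j + 1)) :=
    Finset.prod_pos fun j _ => add_pos (hx _) (hy _)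
  have hQ : (0:ℝ) < ∏ j ∈ Finset.Icc 1 M, (x j + y j) :=
    Finset.prod_pos fun j _ => add_pos (hx _) (hy _)
  have h1 : (0:ℝ) < x M + y (M+1) := add_pos (hx _) (hy _)
  have h2 : (0:ℝ) < x (M+1) + y (M+1) := add_pos (hx _) (hy _)
  have h3 : (0:ℝ) < x M + y 0 := add_pos (hx _) (hy _)
  have h4 : (0:ℝ) < x (M+1) + y 0 := add_pos (hx _) (hy _)
  have h5 : (0:ℝ) < x 0 + y 0 := add_pos (hx _) (hy _)
  rw [Finset.prod_range_succ, Finset.prod_Icc_succ_top (by omega : 1 ≤ M + 1)] at hRN1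
  have heq : RN1 = RN * ((x M + y (M+1)) * (x (M+1) + y 0)) /
      ((x (M+1) + y (M+1)) * (x M + y 0)) := by
    rw [hRN1, hRN]; field_simp
  refine ⟨heq, ?_⟩
  have hfac : (x (M+1) + y (M+1)) * (x M + y 0) ≤ (x M + y (M+1)) * (x (M+1) + y 0) := by
    have key : (0:ℝ) ≤ (y (M+1) - y 0) * (x (M+1) - x M) := by
      rcases le_or_gt (y 0) (y (M+1)) with h | h
      · exact mul_nonneg (by linarith) (by linarith [hcompat₁ h])
      · have := hcompat₂ h; nlinarith
    nlinarith
  rw [heq]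
  rw [le_div_iff₀ (by positivity)]
  calc (1:ℝ) * ((x (M+1) + y (M+1)) * (x M + y 0))
      ≤ 1 * ((x M + y (M+1)) * (x (M+1) + y 0)) := by linarith
    _ ≤ RN * ((x M + y (M+1)) * (x (M+1) + y 0)) := by nlinarith [mul_pos h1 h4]
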